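/- Let $k < m$ be positive integers, $C_k, C_m > 0$, and $h^* = (C_k/C_m)^{1/(m-k)}$. Let $X$ be uniform on $[0, C_k h^k]$ and $Y$ uniform on $[0, C_m h^m]$, independent. Then $P(Y \le X) = 1 - \frac{1}{2}(h/h^*)^{m-k}$ if $0 < h \le h^*$, and $P(Y \le X) = \frac{1}{2}(h^*/h)^{m-k}$ if $h \ge h^*$. -/

import Mathlib

open MeasureTheory ProbabilityTheory intervalIntegral


lemma key_prob {Ω : Type*} [MeasurableSpace Ω] (μ : Measure Ω) [IsProbabilityMeasure μ]
    (a b : ℝ) (ha : 0 < a) (hb : 0 < b) (X Y : Ω → ℝ)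
    (hX : Measure.map X μ = (ENNReal.ofReal a)⁻¹ • volume.restrict (Set.Icc (0 : ℝ) a))
    (hY : Measure.map Y μ = (ENNReal.ofReal b)⁻¹ • volume.restrict (Set.Icc (0 : ℝ) b))
    (hindep : IndepFun X Y μ) :
    μ {ω | Y ω ≤ X ω} = ENNReal.ofReal ((∫ x in Set.Icc (0:ℝ) a, min x b) / (a * b)) := by
  have haX : AEMeasurable X μ := by
    by_contra hc
    have := Measure.map_of_not_aemeasurable hc
    rw [this] at hX
    have h0 : (0 : Measure ℝ) Set.univ = ((ENNReal.ofReal a)⁻¹ • volume.restrict (Set.Icc (0 : ℝ) a)) Set.univ := by rw [hX]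
    simp [Measure.restrict_apply_univ, Real.volume_Icc, ENNReal.inv_mul_cancel,
      (ENNReal.ofReal_pos.2 ha).ne', ENNReal.ofReal_ne_top] at h0
  have haY : AEMeasurable Y μ := by
    by_contra hc
    have := Measure.map_of_not_aemeasurable hc
    rw [this] at hY
    have h0 : (0 : Measure ℝ) Set.univ = ((ENNReal.ofReal b)⁻¹ • volume.restrict (Set.Icc (0 : ℝ) b)) Set.univ := by rw [hY]
    simp [Measure.restrict_apply_univ, Real.volume_Icc, ENNReal.inv_mul_cancel,
      (ENNReal.ofReal_pos.2 hb).ne', ENNReal.ofReal_ne_top] at h0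
  have hmap : μ.map (fun ω => (X ω, Y ω)) = (μ.map X).prod (μ.map Y) :=
    (indepFun_iff_map_prod_eq_prod_map_map haX haY).mp hindep
  have hsmeas : MeasurableSet {p : ℝ × ℝ | p.2 ≤ p.1} :=
    (isClosed_le continuous_snd continuous_fst).measurableSet
  have h1 : μ {ω | Y ω ≤ X ω} = ((μ.map X).prod (μ.map Y)) {p : ℝ × ℝ | p.2 ≤ p.1} := by
    rw [← hmap, Measure.map_apply_of_aemeasurable (haX.prodMk haY) hsmeas]
    rfl
  rw [h1, hX, hY]
  have : ∀ᵐ x ∂((ENNReal.ofReal a)⁻¹ • volume.restrict (Set.Icc (0:ℝ) a) : Measure ℝ), True := ae_of_all _ fun _ => trivial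
  rw [Measure.prod_apply hsmeas]
  have hslice : ∀ x ∈ Set.Icc (0:ℝ) a,
      ((ENNReal.ofReal b)⁻¹ • volume.restrict (Set.Icc (0 : ℝ) b)) (Prod.mk x ⁻¹' {p : ℝ × ℝ | p.2 ≤ p.1})
        = (ENNReal.ofReal b)⁻¹ * ENNReal.ofReal (min x b) := by
    intro x hx
    have hpre : (Prod.mk x ⁻¹' {p : ℝ × ℝ | p.2 ≤ p.1}) = Set.Iic x := rfl
    rw [hpre, Measure.smul_apply, Measure.restrict_apply measurableSet_Iic]
    have : Set.Iic x ∩ Set.Icc 0 b = Set.Icc 0 (min x b) := by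
      ext y
      simp only [Set.mem_inter_iff, Set.mem_Iic, Set.mem_Icc, le_min_iff]
      constructor
      · rintro ⟨h1, h2, h3⟩; exact ⟨h2, h1, h3⟩
      · rintro ⟨h1, h2, h3⟩; exact ⟨h2, h1, h3⟩
    rw [this, Real.volume_Icc, smul_eq_mul, sub_zero]
  rw [lintegral_smul_measure]
  rw [setLIntegral_congr_fun (measurableSet_Icc)
    hslice]
  rw [lintegral_const_mul' _ _ (by simp [(ENNReal.ofReal_pos.2 hb).ne'])]
  have hint : IntegrableOn (fun x => min x b) (Set.Icc (0:ℝ) a) volume :=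
    ((continuous_id.min continuous_const).integrableOn_Icc)
  have hnn : 0 ≤ᵐ[volume.restrict (Set.Icc (0:ℝ) a)] fun x => min x b := by
    filter_upwards [ae_restrict_mem measurableSet_Icc] with x hx
    exact le_min hx.1 hb.le
  rw [← ofReal_integral_eq_lintegral_ofReal hint hnn]
  rw [ENNReal.ofReal_div_of_pos (mul_pos ha hb), ENNReal.ofReal_mul ha.le]
  rw [ENNReal.div_eq_inv_mul]
  rw [ENNReal.mul_inv (Or.inl (ENNReal.ofReal_pos.2 ha).ne') (Or.inl ENNReal.ofReal_ne_top)]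
  ring


lemma icc_to_ii (a b : ℝ) (ha : 0 ≤ a) :
    ∫ x in Set.Icc (0:ℝ) a, min x b = ∫ x in (0:ℝ)..a, min x b := by
  rw [MeasureTheory.integral_Icc_eq_integral_Ioc, intervalIntegral.integral_of_le ha]

lemma int_min_ge (a b : ℝ) (ha : 0 ≤ a) (hab : a ≤ b) :
    ∫ x in Set.Icc (0:ℝ) a, min x b = a^2/2 := by
  rw [icc_to_ii a b ha]
  rw [intervalIntegral.integral_congr (g := fun x => x)
    (fun x hx => by
      rw [Set.uIcc_of_le ha] at hx
      exact min_eq_left (hx.2.trans hab))]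
  simp [integral_id]

lemma int_min_le (a b : ℝ) (hb : 0 ≤ b) (hba : b ≤ a) :
    ∫ x in Set.Icc (0:ℝ) a, min x b = b*a - b^2/2 := by
  rw [icc_to_ii a b (hb.trans hba)]
  have hcont : ∀ c d : ℝ, IntervalIntegrable (fun x => min x b) volume c d :=
    fun c d => (continuous_id.min continuous_const).intervalIntegrable c d
  rw [← intervalIntegral.integral_add_adjacent_intervals (hcont 0 b) (hcont b a)]
  have h1 : ∫ x in (0:ℝ)..b, min x b = b^2/2 := by
    rw [intervalIntegral.integral_congr (g := fun x => x)
      (fun x hx => by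
        rw [Set.uIcc_of_le hb] at hx
        exact min_eq_left hx.2)]
    simp [integral_id]
  have h2 : ∫ x in (b:ℝ)..a, min x b = b * (a - b) := by
    rw [intervalIntegral.integral_congr (g := fun _ => b)
      (fun x hx => by
        rw [Set.uIcc_of_le hba] at hx
        exact min_eq_right hx.1)]
    simp [mul_comm]
  rw [h1, h2]; ring

theorem stmt_3 {Ω : Type*} [MeasurableSpace Ω] (μ : Measure Ω) [IsProbabilityMeasure μ]
    (k m : ℕ) (hk : 0 < k) (hkm : k < m)
    (Ck Cm : ℝ) (hCk : 0 < Ck) (hCm : 0 < Cm)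
    (hstar : ℝ) (hdef : hstar = (Ck / Cm) ^ ((1 : ℝ) / ((m : ℝ) - (k : ℝ))))
    (h : ℝ) (hpos : 0 < h)
    (X Y : Ω → ℝ)
    (hX : Measure.map X μ =
      (ENNReal.ofReal (Ck * h ^ k))⁻¹ • volume.restrict (Set.Icc (0 : ℝ) (Ck * h ^ k)))
    (hY : Measure.map Y μ =
      (ENNReal.ofReal (Cm * h ^ m))⁻¹ • volume.restrict (Set.Icc (0 : ℝ) (Cm * h ^ m)))
    (hindep : IndepFun X Y μ) :
    (h ≤ hstar →
      μ {ω | Y ω ≤ X ω} = ENNReal.ofReal (1 - (1 / 2) * (h / hstar) ^ (m - k))) ∧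
    (hstar ≤ h →
      μ {ω | Y ω ≤ X ω} = ENNReal.ofReal ((1 / 2) * (hstar / h) ^ (m - k))) := by
  set d : ℕ := m - k with hd_def
  have hd : 0 < d := Nat.sub_pos_of_lt hkm
  have hmk : m = k + d := by omega
  have hdr : (m : ℝ) - (k : ℝ) = (d : ℝ) := by
    rw [hmk]; push_cast; ring
  have hrat : (0:ℝ) < Ck / Cm := div_pos hCk hCm
  have hstar_pos : 0 < hstar := by
    rw [hdef]; exact Real.rpow_pos_of_pos hrat _
  have hpow : hstar ^ d = Ck / Cm := by
    rw [hdef, hdr, ← Real.rpow_natCast ((Ck/Cm) ^ ((1:ℝ)/(d:ℝ))) d, ← Real.rpow_mul hrat.le,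
      one_div, inv_mul_cancel₀ (by exact_mod_cast hd.ne'), Real.rpow_one]
  set a : ℝ := Ck * h ^ k with ha_def
  set b : ℝ := Cm * h ^ m with hb_def
  have ha : 0 < a := by positivity
  have hb : 0 < b := by positivity
  have hbsplit : b = Cm * (h ^ k * h ^ d) := by rw [hb_def, hmk, pow_add]
  have hkey := key_prob μ a b ha hb X Y hX hY hindep
  have hiff : h ≤ hstar ↔ b ≤ a := by
    rw [hbsplit, ha_def]
    constructor
    · intro hle
      have : h ^ d ≤ hstar ^ d := pow_le_pow_left₀ hpos.le hle d
      rw [hpow] at this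
      have h2 : Cm * h ^ d ≤ Ck := by
        rw [← le_div_iff₀' hCm]; exact this
      calc Cm * (h ^ k * h ^ d) = (Cm * h ^ d) * h ^ k := by ring
        _ ≤ Ck * h ^ k := by
            exact mul_le_mul_of_nonneg_right h2 (by positivity)
    · intro hle
      have h2 : (Cm * h ^ d) * h ^ k ≤ Ck * h ^ k := by
        calc (Cm * h ^ d) * h ^ k = Cm * (h ^ k * h ^ d) := by ring
          _ ≤ Ck * h ^ k := hle
      have h3 : Cm * h ^ d ≤ Ck := le_of_mul_le_mul_right h2 (by positivity)
      have h4 : h ^ d ≤ hstar ^ d := by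
        rw [hpow, le_div_iff₀' hCm]; exact h3
      exact le_of_pow_le_pow_left₀ hd.ne' hstar_pos.le h4
  have e1 : (h / hstar) ^ d = b / a := by
    rw [div_pow, hpow, hbsplit, ha_def]
    field_simp
  have e2 : (hstar / h) ^ d = a / b := by
    rw [div_pow, hpow, hbsplit, ha_def]
    field_simp
  constructor
  · intro hle
    have hba : b ≤ a := hiff.mp hle
    rw [hkey, int_min_le a b hb.le hba]
    congr 1
    rw [e1]
    field_simp
  · intro hle
    have hab : a ≤ b := by
      rcases eq_or_lt_of_le hle with heq | hlt
      · rw [hbsplit, ha_def]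
        have : h ^ d = Ck / Cm := by rw [← hpow, heq]
        rw [show Cm * (h^k * h^d) = (Cm * h^d) * h^k by ring, this]
        rw [mul_div_cancel₀ _ hCm.ne']  -- Cm * (Ck/Cm) = Ck? careful
      · have : ¬ (h ≤ hstar) := not_le.mpr hlt
        exact le_of_not_ge (fun hc => this (hiff.mpr hc))
    rw [hkey, int_min_ge a b ha.le hab]
    congr 1
    rw [e2]
    field_simp
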